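/- For all positive integers α and j with 10·j ≤ α, it holds that (Γ(2α)/(2·Γ(α)²))·4^{1−α}·∫_{−1}^{1} (1 − x²)^{α−1−j} dx ≤ 6/5, where Γ denotes the Gamma function. -/

import Mathlib

open Finset Real MeasureTheory

noncomputable def Pn (n : ℕ) : ℝ := ∏ i ∈ Finset.range n, (2 * (i : ℝ) + 2) / (2 * i + 3)

lemma Pn_pos (n : ℕ) : 0 < Pn n := by
  apply Finset.prod_pos
  intro i _
  positivity

lemma integral_eq (n : ℕ) :
    (∫ x in Set.Icc (-1 : ℝ) 1, (1 - x ^ 2) ^ n) = 2 * Pn n := by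
  have h1 : (∫ x in Set.Icc (-1 : ℝ) 1, (1 - x ^ 2) ^ n)
      = ∫ x in (-1 : ℝ)..1, (1 - x ^ 2) ^ n := by
    rw [intervalIntegral.integral_of_le (by norm_num), MeasureTheory.integral_Icc_eq_integral_Ioc]
  have h2 : (∫ x in (0 : ℝ)..π, (-Real.sin x) • ((fun y => (1 - y ^ 2) ^ n) ∘ Real.cos) x)
      = ∫ y in (Real.cos 0)..(Real.cos π), (1 - y ^ 2) ^ n := by
    apply intervalIntegral.integral_comp_smul_deriv
    · intro x _; simpa using (Real.hasDerivAt_cos x)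
    · exact (Real.continuous_sin.neg).continuousOn
    · continuity
  rw [Real.cos_zero, Real.cos_pi] at h2
  have h3 : (∫ x in (0 : ℝ)..π, (-Real.sin x) • ((fun y => (1 - y ^ 2) ^ n) ∘ Real.cos) x)
      = - ∫ x in (0 : ℝ)..π, Real.sin x ^ (2 * n + 1) := by
    rw [← intervalIntegral.integral_neg]
    apply intervalIntegral.integral_congr
    intro x _
    have : 1 - Real.cos x ^ 2 = Real.sin x ^ 2 := by
      rw [Real.sin_sq]
    simp only [Function.comp, smul_eq_mul, this]
    rw [pow_add, pow_mul, pow_one]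
    ring
  rw [h1, intervalIntegral.integral_symm 1 (-1), ← h2, h3, neg_neg, integral_sin_pow_odd, Pn]

lemma key_fact (m : ℕ) : ((2 * m + 1).factorial : ℝ) * Pn m = 4 ^ m * (m.factorial : ℝ) ^ 2 := by
  induction m with
  | zero => simp [Pn]
  | succ k ih =>
    have : Pn (k + 1) = Pn k * ((2 * (k : ℝ) + 2) / (2 * k + 3)) := by
      rw [Pn, Finset.prod_range_succ]; rfl
    rw [this]
    have h1 : 2 * (k + 1) + 1 = (2 * k + 1) + 1 + 1 := by ring
    rw [h1, Nat.factorial_succ (2 * k + 1 + 1), Nat.factorial_succ (2 * k + 1),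
      Nat.factorial_succ k]
    push_cast
    have h3 : (2 * (k : ℝ) + 3) ≠ 0 := by positivity
    field_simp
    linear_combination (4 * (2 * (k : ℝ) + 3) * ((k : ℝ) + 1)) * ih

theorem stmt14 (α j : ℕ) (hα : 1 ≤ α) (hj : 1 ≤ j) (h : 10 * j ≤ α) :
    (Real.Gamma (2 * (α : ℝ)) / (2 * (Real.Gamma (α : ℝ)) ^ 2)) *
        (4 : ℝ) ^ ((1 : ℤ) - (α : ℤ)) *
        (∫ x in Set.Icc (-1 : ℝ) 1, (1 - x ^ 2) ^ (α - 1 - j)) ≤ 6 / 5 := by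
  -- setup
  set m := α - 1 with hm
  set n := α - 1 - j with hn
  have hα10 : 10 ≤ α := le_trans (by omega) h
  have hjm : j ≤ m := by omega
  have hmn : m = n + j := by omega
  -- Gamma values
  have hG1 : Real.Gamma (α : ℝ) = (m.factorial : ℝ) := by
    have : (α : ℝ) = (m : ℝ) + 1 := by
      rw [hm]; push_cast [Nat.cast_sub hα]; ring
    rw [this, Real.Gamma_nat_eq_factorial]
  have hG2 : Real.Gamma (2 * (α : ℝ)) = ((2 * m + 1).factorial : ℝ) := by
    have : 2 * (α : ℝ) = ((2 * m + 1 : ℕ) : ℝ) + 1 := by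
      push_cast [hm, Nat.cast_sub hα]; ring
    rw [this, Real.Gamma_nat_eq_factorial]
  -- the constant times integral for exponent m equals 1
  have hpow : (4 : ℝ) ^ ((1 : ℤ) - (α : ℤ)) = 1 / 4 ^ m := by
    have : (1 : ℤ) - (α : ℤ) = -(m : ℤ) := by omega
    rw [this, zpow_neg, zpow_natCast, one_div]
  have hC : (Real.Gamma (2 * (α : ℝ)) / (2 * (Real.Gamma (α : ℝ)) ^ 2)) *
      (4 : ℝ) ^ ((1 : ℤ) - (α : ℤ)) * (2 * Pn m) = 1 := by
    rw [hG1, hG2, hpow]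
    have hk := key_fact m
    have hf : (0 : ℝ) < (m.factorial : ℝ) := by positivity
    have h4 : (0 : ℝ) < 4 ^ m := by positivity
    field_simp
    nlinarith [Pn_pos m]
  -- LHS as product
  rw [integral_eq]
  have hsplit : Pn m = Pn n * ∏ k ∈ Finset.range j, (2 * ((n : ℝ) + k) + 2) / (2 * ((n : ℝ) + k) + 3) := by
    rw [hmn, Pn, Pn, Finset.prod_range_add]
    congr 1
    apply Finset.prod_congr rfl
    intro k _
    push_cast
    ring
  set Q : ℝ := ∏ k ∈ Finset.range j, (2 * ((n : ℝ) + k) + 3) / (2 * ((n : ℝ) + k) + 2) with hQ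
  have hPnm : Pn n = Pn m * Q := by
    rw [hsplit, hQ, mul_assoc, ← Finset.prod_mul_distrib]
    have : ∀ k ∈ Finset.range j, (2 * ((n : ℝ) + k) + 2) / (2 * ((n : ℝ) + k) + 3) *
        ((2 * ((n : ℝ) + k) + 3) / (2 * ((n : ℝ) + k) + 2)) = 1 := by
      intro k _
      have h1 : (2 * ((n : ℝ) + k) + 2) ≠ 0 := by positivity
      have h2 : (2 * ((n : ℝ) + k) + 3) ≠ 0 := by positivity
      field_simp
    rw [Finset.prod_congr rfl this]
    simp
  have hLHS : (Real.Gamma (2 * (α : ℝ)) / (2 * (Real.Gamma (α : ℝ)) ^ 2)) *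
      (4 : ℝ) ^ ((1 : ℤ) - (α : ℤ)) * (2 * Pn n) = Q := by
    rw [hPnm]
    calc (Real.Gamma (2 * (α : ℝ)) / (2 * (Real.Gamma (α : ℝ)) ^ 2)) *
        (4 : ℝ) ^ ((1 : ℤ) - (α : ℤ)) * (2 * (Pn m * Q))
        = ((Real.Gamma (2 * (α : ℝ)) / (2 * (Real.Gamma (α : ℝ)) ^ 2)) *
        (4 : ℝ) ^ ((1 : ℤ) - (α : ℤ)) * (2 * Pn m)) * Q := by ring
      _ = Q := by rw [hC, one_mul]
  rw [hLHS]
  -- bound Q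
  have hnj : 18 * j ≤ 2 * n + 2 := by omega
  have hjR : (0 : ℝ) < (j : ℝ) := by exact_mod_cast hj
  have hbound : Q ≤ Real.exp (1 / 18) := by
    have hstep : Q ≤ ∏ _k ∈ Finset.range j, Real.exp (1 / (18 * (j : ℝ))) := by
      apply Finset.prod_le_prod
      · intro k _; positivity
      · intro k _
        have h2 : (0 : ℝ) < 2 * ((n : ℝ) + k) + 2 := by positivity
        have hfac : (2 * ((n : ℝ) + k) + 3) / (2 * ((n : ℝ) + k) + 2)
            = 1 + 1 / (2 * ((n : ℝ) + k) + 2) := by field_simp; ring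
        rw [hfac]
        have hge : 18 * (j : ℝ) ≤ 2 * ((n : ℝ) + k) + 2 := by
          have : (18 * j : ℝ) ≤ (2 * n + 2 : ℕ) := by exact_mod_cast hnj
          push_cast at this
          nlinarith [Nat.cast_nonneg (α := ℝ) k]
        have h18 : (0 : ℝ) < 18 * (j : ℝ) := by positivity
        have hle : 1 / (2 * ((n : ℝ) + k) + 2) ≤ 1 / (18 * (j : ℝ)) :=
          one_div_le_one_div_of_le h18 hge
        calc 1 + 1 / (2 * ((n : ℝ) + k) + 2) ≤ 1 + 1 / (18 * (j : ℝ)) := by linarith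
          _ ≤ Real.exp (1 / (18 * (j : ℝ))) := by
              have := Real.add_one_le_exp (1 / (18 * (j : ℝ)))
              linarith
    calc Q ≤ ∏ _k ∈ Finset.range j, Real.exp (1 / (18 * (j : ℝ))) := hstep
      _ = Real.exp (1 / (18 * (j : ℝ))) ^ j := by rw [Finset.prod_const, Finset.card_range]
      _ = Real.exp ((j : ℝ) * (1 / (18 * (j : ℝ)))) := by rw [← Real.exp_nat_mul]
      _ = Real.exp (1 / 18) := by
          congr 1
          field_simp
  have hexp : Real.exp (1 / 18) ≤ 6 / 5 := by
    have hlog : (1 : ℝ) / 18 ≤ Real.log (6 / 5) := by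
      have := Real.one_sub_inv_le_log_of_pos (x := (6 / 5 : ℝ)) (by norm_num)
      norm_num at this ⊢
      linarith
    calc Real.exp (1 / 18) ≤ Real.exp (Real.log (6 / 5)) := Real.exp_le_exp.mpr hlog
      _ = 6 / 5 := Real.exp_log (by norm_num)
  linarith
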